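/- arXiv:2201.03077 — 7 statements merged into one kernel-verified Lean document; each statement's English description precedes it below -/
import Mathlib

section
/- Assume the N-vector of ones 1_N lies in the column span of X₁ (i.e., there exists a ∈ ℝ^{P₁} with X₁ a = 1_N). Then every row of the weight matrix W = X V Xᵀ Φ⁻¹ sums to 1; that is, W · 1_N = 1_N. -/
open Matrix

/-- If the vector of ones lies in the column span of `X₁`, then every row of the
weight matrix `W = X V Xᵀ Φ⁻¹` sums to 1, i.e. `W · 1 = 1`. -/
theorem stmt_0 (N P₁ P₂ : ℕ) (hN : 0 < N) (hP₁ : 0 < P₁) (hP₂ : 0 < P₂)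
    (X₁ : Matrix (Fin N) (Fin P₁) ℝ) (X₂ : Matrix (Fin N) (Fin P₂) ℝ)
    (hX₁ : LinearIndependent ℝ X₁ᵀ)
    (d : Fin N → ℝ) (hd : ∀ i, 0 < d i)
    (S : Matrix (Fin P₂) (Fin P₂) ℝ) (hS : S.PosDef)
    (hones : ∃ a : Fin P₁ → ℝ, X₁ *ᵥ a = fun _ => (1 : ℝ)) :
    let Φ : Matrix (Fin N) (Fin N) ℝ := Matrix.diagonal d
    let X : Matrix (Fin N) (Fin P₁ ⊕ Fin P₂) ℝ := Matrix.fromCols X₁ X₂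
    let V : Matrix (Fin P₁ ⊕ Fin P₂) (Fin P₁ ⊕ Fin P₂) ℝ :=
      (Xᵀ * Φ⁻¹ * X + Matrix.fromBlocks 0 0 0 S⁻¹)⁻¹
    let W : Matrix (Fin N) (Fin N) ℝ := X * V * Xᵀ * Φ⁻¹
    W *ᵥ (fun _ => (1 : ℝ)) = fun _ => (1 : ℝ) := by
  intro Φ X V W
  obtain ⟨a, ha⟩ := hones
  set b : Fin P₁ ⊕ Fin P₂ → ℝ := Sum.elim a 0 with hb
  have hΦ : Φ.PosDef := posDef_diagonal_iff.mpr hd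
  have hΦinv : (Φ⁻¹).PosDef := hΦ.inv
  have hSinv : (S⁻¹).PosDef := hS.inv
  have hXb : X *ᵥ b = fun _ => (1 : ℝ) := by
    simp [X, hb, ha]
  have hA : (Xᵀ * Φ⁻¹ * X).PosSemidef := by
    have := hΦinv.posSemidef.conjTranspose_mul_mul_same X
    rwa [conjTranspose_eq_transpose_of_trivial] at this
  set M : Matrix (Fin P₁ ⊕ Fin P₂) (Fin P₁ ⊕ Fin P₂) ℝ :=
    Xᵀ * Φ⁻¹ * X + Matrix.fromBlocks 0 0 0 S⁻¹ with hM
  -- quadratic form decomposition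
  have hquad : ∀ x : Fin P₁ ⊕ Fin P₂ → ℝ,
      x ⬝ᵥ M *ᵥ x = (X *ᵥ x) ⬝ᵥ Φ⁻¹ *ᵥ (X *ᵥ x)
        + (x ∘ Sum.inr) ⬝ᵥ S⁻¹ *ᵥ (x ∘ Sum.inr) := by
    intro x
    rw [hM, add_mulVec, dotProduct_add]
    congr 1
    · rw [← mulVec_mulVec, ← mulVec_mulVec, dotProduct_mulVec, vecMul_transpose]
    · rw [fromBlocks_mulVec]
      simp only [zero_mulVec, add_zero, zero_add]
      conv_lhs => rw [← Sum.elim_comp_inl_inr x]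
      rw [sumElim_dotProduct_sumElim, dotProduct_zero, zero_add, Sum.elim_comp_inr]
  have hMpd : M.PosDef := by
    rw [posDef_iff_dotProduct_mulVec]
    constructor
    · refine hA.isHermitian.add ?_
      have hSt : (S⁻¹)ᵀ = S⁻¹ := by
        rw [← conjTranspose_eq_transpose_of_trivial]; exact hSinv.isHermitian
      simp [Matrix.IsHermitian, conjTranspose_eq_transpose_of_trivial,
        fromBlocks_transpose, hSt]
    · intro x hx
      have hsx : star x = x := by simp
      rw [hsx, hquad x]
      by_cases h2 : x ∘ Sum.inr = 0
      · have h1 : x ∘ Sum.inl ≠ 0 := by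
          intro h1
          apply hx
          funext i
          cases i with
          | inl i => exact congrFun h1 i
          | inr i => exact congrFun h2 i
        have hXx : X *ᵥ x = X₁ *ᵥ (x ∘ Sum.inl) := by
          conv_lhs => rw [← Sum.elim_comp_inl_inr x]
          simp [X, h2]
        have hne : X *ᵥ x ≠ 0 := by
          rw [hXx]
          intro h0
          apply h1
          have := Fintype.linearIndependent_iff.mp hX₁ (x ∘ Sum.inl) ?_
          · funext i; exact this i
          · funext i
            have := congrFun h0 i
            simpa [mulVec, dotProduct, Finset.sum_apply, mul_comm] using this
        have t1 : 0 < (X *ᵥ x) ⬝ᵥ Φ⁻¹ *ᵥ (X *ᵥ x) := by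
          have := hΦinv.dotProduct_mulVec_pos hne
          simpa using this
        have t2 : 0 ≤ (x ∘ Sum.inr) ⬝ᵥ S⁻¹ *ᵥ (x ∘ Sum.inr) := by
          have := hSinv.posSemidef.dotProduct_mulVec_nonneg (x ∘ Sum.inr)
          simpa using this
        linarith
      · have t2 : 0 < (x ∘ Sum.inr) ⬝ᵥ S⁻¹ *ᵥ (x ∘ Sum.inr) := by
          have := hSinv.dotProduct_mulVec_pos h2
          simpa using this
        have t1 : 0 ≤ (X *ᵥ x) ⬝ᵥ Φ⁻¹ *ᵥ (X *ᵥ x) := by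
          have := hΦinv.posSemidef.dotProduct_mulVec_nonneg (X *ᵥ x)
          simpa using this
        linarith
  have hVM : V * M = 1 := by
    have : V = M⁻¹ := rfl
    rw [this]
    exact nonsing_inv_mul M ((Matrix.isUnit_iff_isUnit_det M).mp hMpd.isUnit)
  have step : (Xᵀ * Φ⁻¹ * X) *ᵥ b = M *ᵥ b := by
    rw [hM, add_mulVec, fromBlocks_mulVec]
    simp [hb]
  calc W *ᵥ (fun _ => (1 : ℝ)) = X *ᵥ (V *ᵥ ((Xᵀ * Φ⁻¹ * X) *ᵥ b)) := by
        rw [← hXb]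
        simp only [W, ← mulVec_mulVec]
    _ = X *ᵥ (V *ᵥ (M *ᵥ b)) := by rw [step]
    _ = (X * (V * M)) *ᵥ b := by rw [mulVec_mulVec, mulVec_mulVec, Matrix.mul_assoc]
    _ = X *ᵥ b := by rw [hVM, Matrix.mul_one]
    _ = fun _ => (1 : ℝ) := hXb
end

section
/- Assume the N-vector of ones 1_N lies in the column span of X₁. Fix i ∈ {1,…,N}. Then the shrinkage factor satisfies 0 < b_{iBᵢ} ≤ 1 and the pooling factor satisfies 0 ≤ b_{iLᵢ} < 1, and b_{iLᵢ} = 1 − b_{iBᵢ}. -/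
open Matrix

open scoped Classical in
/-- If the vector of ones lies in the column span of `X₁`, then for any index `i`
the shrinkage factor `b_{iBᵢ}` satisfies `0 < b_{iBᵢ} ≤ 1`, the pooling factor `b_{iLᵢ}`
satisfies `0 ≤ b_{iLᵢ} < 1`, and `b_{iLᵢ} = 1 - b_{iBᵢ}`. -/
theorem stmt_1 (N P₁ P₂ : ℕ) (hN : 0 < N) (hP₁ : 0 < P₁) (hP₂ : 0 < P₂)
    (X₁ : Matrix (Fin N) (Fin P₁) ℝ) (X₂ : Matrix (Fin N) (Fin P₂) ℝ)
    (hX₁ : LinearIndependent ℝ X₁ᵀ)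
    (d : Fin N → ℝ) (hd : ∀ i, 0 < d i)
    (S : Matrix (Fin P₂) (Fin P₂) ℝ) (hS : S.PosDef)
    (hones : ∃ a : Fin P₁ → ℝ, X₁ *ᵥ a = fun _ => (1 : ℝ))
    (i : Fin N) :
    let Φ : Matrix (Fin N) (Fin N) ℝ := Matrix.diagonal d
    let X : Matrix (Fin N) (Fin P₁ ⊕ Fin P₂) ℝ := Matrix.fromCols X₁ X₂
    let V : Matrix (Fin P₁ ⊕ Fin P₂) (Fin P₁ ⊕ Fin P₂) ℝ :=
      (Xᵀ * Φ⁻¹ * X + Matrix.fromBlocks 0 0 0 S⁻¹)⁻¹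
    let W : Matrix (Fin N) (Fin N) ℝ := X * V * Xᵀ * Φ⁻¹
    -- the borrower cluster: indices with the same covariate row and the same noise variance
    let B : Finset (Fin N) := Finset.univ.filter (fun j => (∀ k, X j k = X i k) ∧ d j = d i)
    -- shrinkage factor
    let bB : ℝ := ∑ j ∈ B, W i j
    -- pooling factor (sum over the lenders, the complement of the borrower cluster)
    let bL : ℝ := ∑ j ∈ Bᶜ, W i j
    0 < bB ∧ bB ≤ 1 ∧ 0 ≤ bL ∧ bL < 1 ∧ bL = 1 - bB := by
  intro Φ X V W B bB bL
  obtain ⟨a, ha⟩ := hones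
  have hΦinv : Φ⁻¹ = Matrix.diagonal (fun j => (d j)⁻¹) := by
    show (Matrix.diagonal d)⁻¹ = _
    apply Matrix.inv_eq_right_inv
    rw [Matrix.diagonal_mul_diagonal]
    have h1 : (fun i => d i * (d i)⁻¹) = fun _ : Fin N => (1 : ℝ) := by
      funext j
      exact mul_inv_cancel₀ (hd j).ne'
    rw [h1, Matrix.diagonal_one]
  set M : Matrix (Fin P₁ ⊕ Fin P₂) (Fin P₁ ⊕ Fin P₂) ℝ :=
    Xᵀ * Φ⁻¹ * X + Matrix.fromBlocks 0 0 0 S⁻¹ with hMdef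
  have hVM : V = M⁻¹ := rfl
  have hSinv : (S⁻¹).PosDef := hS.inv
  -- the quadratic form of M
  have hquad : ∀ v : (Fin P₁ ⊕ Fin P₂) → ℝ,
      v ⬝ᵥ (M *ᵥ v) = (∑ j, (d j)⁻¹ * ((X *ᵥ v) j) ^ 2)
        + (fun p => v (Sum.inr p)) ⬝ᵥ (S⁻¹ *ᵥ fun p => v (Sum.inr p)) := by
    intro v
    have h2 : v ⬝ᵥ (Matrix.fromBlocks (0 : Matrix (Fin P₁) (Fin P₁) ℝ) 0 0 S⁻¹ *ᵥ v)
        = (fun p => v (Sum.inr p)) ⬝ᵥ (S⁻¹ *ᵥ fun p => v (Sum.inr p)) := by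
      have hv : v = Sum.elim (fun p => v (Sum.inl p)) (fun p => v (Sum.inr p)) := by
        funext k; cases k <;> rfl
      conv_lhs => rw [hv, Matrix.fromBlocks_mulVec]
      simp
    have h1 : v ⬝ᵥ ((Xᵀ * Φ⁻¹ * X) *ᵥ v) = ∑ j, (d j)⁻¹ * ((X *ᵥ v) j) ^ 2 := by
      rw [← Matrix.mulVec_mulVec, ← Matrix.mulVec_mulVec, Matrix.dotProduct_mulVec,
        Matrix.vecMul_transpose, hΦinv]
      simp only [dotProduct, Matrix.mulVec_diagonal]
      exact Finset.sum_congr rfl fun j _ => by ring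
    rw [hMdef, Matrix.add_mulVec, dotProduct_add, h1, h2]
  -- M is positive definite
  have hMpd : M.PosDef := by
    refine Matrix.PosDef.of_dotProduct_mulVec_pos ?_ ?_
    · rw [hMdef]
      refine Matrix.IsHermitian.add ?_ ?_
      · have h := Matrix.isHermitian_conjTranspose_mul_mul X
          (Matrix.isHermitian_diagonal (fun j => (d j)⁻¹))
        rw [Matrix.conjTranspose_eq_transpose_of_trivial] at h
        rw [hΦinv]
        exact h
      · show _ᴴ = _
        rw [Matrix.fromBlocks_conjTranspose]
        have hs : S⁻¹ᵀ = S⁻¹ := by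
          rw [← Matrix.conjTranspose_eq_transpose_of_trivial]
          exact hSinv.isHermitian.eq
        simp [hs]
    · intro v hv
      rw [star_trivial, hquad v]
      rcases eq_or_ne (fun p => v (Sum.inr p)) 0 with h2 | h2
      · -- the inl part must be nonzero
        have hv1 : (fun p => v (Sum.inl p)) ≠ 0 := by
          intro h1
          apply hv
          funext k
          cases k with
          | inl p => exact congrFun h1 p
          | inr p => exact congrFun h2 p
        have hXv : X *ᵥ v = X₁ *ᵥ fun p => v (Sum.inl p) := by
          have hvv : v = Sum.elim (fun p => v (Sum.inl p)) (fun p => v (Sum.inr p)) := by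
            funext k; cases k <;> rfl
          conv_lhs => rw [hvv]
          rw [show X = Matrix.fromCols X₁ X₂ from rfl,
            Matrix.fromCols_mulVec_sumElim, h2]
          simp
        have hXvne : X *ᵥ v ≠ 0 := by
          rw [hXv]
          intro h0
          apply hv1
          have := Fintype.linearIndependent_iff.1 hX₁ (fun p => v (Sum.inl p)) ?_
          · funext p; exact this p
          · funext j
            have := congrFun h0 j
            simpa [Matrix.mulVec, dotProduct, mul_comm] using this
        obtain ⟨j0, hj0⟩ := Function.ne_iff.1 hXvne
        have hpos : 0 < ∑ j, (d j)⁻¹ * ((X *ᵥ v) j) ^ 2 := by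
          refine Finset.sum_pos' (fun j _ => ?_) ⟨j0, Finset.mem_univ _, ?_⟩
          · have hdj : 0 ≤ (d j)⁻¹ := (inv_pos.2 (hd j)).le
            positivity
          · have hsq : 0 < ((X *ᵥ v) j0) ^ 2 :=
              lt_of_le_of_ne (sq_nonneg _) (Ne.symm (pow_ne_zero 2 hj0))
            exact mul_pos (inv_pos.2 (hd j0)) hsq
        have hnn : 0 ≤ (fun p => v (Sum.inr p)) ⬝ᵥ (S⁻¹ *ᵥ fun p => v (Sum.inr p)) := by
          have := hSinv.posSemidef.dotProduct_mulVec_nonneg (fun p => v (Sum.inr p))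
          rwa [star_trivial] at this
        linarith
      · have hpos : 0 < (fun p => v (Sum.inr p)) ⬝ᵥ (S⁻¹ *ᵥ fun p => v (Sum.inr p)) := by
          have := hSinv.dotProduct_mulVec_pos h2
          rwa [star_trivial] at this
        have hnn : 0 ≤ ∑ j, (d j)⁻¹ * ((X *ᵥ v) j) ^ 2 := by
          refine Finset.sum_nonneg fun j _ => ?_
          have hdj : 0 ≤ (d j)⁻¹ := (inv_pos.2 (hd j)).le
          positivity
        linarith
  have hVpd : V.PosDef := by rw [hVM]; exact hMpd.inv
  have hMV : M * V = 1 := by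
    rw [hVM]
    exact Matrix.mul_nonsing_inv M (isUnit_iff_ne_zero.2 hMpd.det_pos.ne')
  have hVMone : V * M = 1 := by
    rw [hVM]
    exact Matrix.nonsing_inv_mul M (isUnit_iff_ne_zero.2 hMpd.det_pos.ne')
  -- row sums of W are 1
  have hXu : X *ᵥ Sum.elim a (0 : Fin P₂ → ℝ) = fun _ => (1 : ℝ) := by
    rw [show X = Matrix.fromCols X₁ X₂ from rfl, Matrix.fromCols_mulVec_sumElim, ha]
    simp
  have hMu : M *ᵥ Sum.elim a (0 : Fin P₂ → ℝ) = (Xᵀ * Φ⁻¹) *ᵥ (fun _ => (1 : ℝ)) := by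
    have hF0 : Matrix.fromBlocks (0 : Matrix (Fin P₁) (Fin P₁) ℝ) 0 0 S⁻¹ *ᵥ
        Sum.elim a (0 : Fin P₂ → ℝ) = 0 := by
      rw [Matrix.fromBlocks_mulVec]
      funext k
      cases k <;> simp
    rw [hMdef, Matrix.add_mulVec, hF0, add_zero, ← Matrix.mulVec_mulVec, hXu]
  have hWrow : ∀ i' : Fin N, ∑ j, W i' j = 1 := by
    have hW1 : W *ᵥ (fun _ => (1 : ℝ)) = fun _ => (1 : ℝ) := by
      show (X * V * Xᵀ * Φ⁻¹) *ᵥ _ = _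
      rw [Matrix.mul_assoc (X * V) Xᵀ Φ⁻¹, ← Matrix.mulVec_mulVec, ← hMu,
        Matrix.mulVec_mulVec, Matrix.mul_assoc X V M, hVMone, Matrix.mul_one, hXu]
    intro i'
    have := congrFun hW1 i'
    simpa [Matrix.mulVec, dotProduct] using this
  -- entries of row i of W
  set x : (Fin P₁ ⊕ Fin P₂) → ℝ := fun k => X i k with hxdef
  have hWij : ∀ j, W i j = (x ⬝ᵥ (V *ᵥ fun k => X j k)) * (d j)⁻¹ := by
    intro j
    show (X * V * Xᵀ * Φ⁻¹) i j = _
    rw [hΦinv, Matrix.mul_diagonal]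
    congr 1
    rw [Matrix.mul_assoc X V Xᵀ, Matrix.mul_apply]
    simp only [Matrix.mul_apply, Matrix.transpose_apply, dotProduct, Matrix.mulVec,
      Finset.mul_sum]
    rfl
  set q : ℝ := x ⬝ᵥ (V *ᵥ x) with hqdef
  have hiB : i ∈ B := by simp [B]
  have hBij : ∀ j ∈ B, W i j = q * (d i)⁻¹ := by
    intro j hj
    simp only [B, Finset.mem_filter, Finset.mem_univ, true_and] at hj
    rw [hWij j, hj.2, show (fun k => X j k) = x from funext hj.1, ← hqdef]
  have hbBeq : bB = (B.card : ℝ) * (q * (d i)⁻¹) := by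
    show (∑ j ∈ B, W i j) = _
    rw [Finset.sum_congr rfl hBij, Finset.sum_const, nsmul_eq_mul]
  -- q is positive
  have hxne : x ≠ 0 := by
    intro hx0
    have : ∀ j, W i j = 0 := by
      intro j
      rw [hWij j, hx0, zero_dotProduct, zero_mul]
    have h0 : (∑ j, W i j) = 0 := by simp [this]
    rw [hWrow i] at h0
    norm_num at h0
  have hqpos : 0 < q := by
    have := hVpd.dotProduct_mulVec_pos hxne
    rwa [star_trivial] at this
  -- key inequality : (card B) * (d i)⁻¹ * q ^ 2 ≤ q
  have hkey : (B.card : ℝ) * ((d i)⁻¹ * q ^ 2) ≤ q := by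
    set v : (Fin P₁ ⊕ Fin P₂) → ℝ := V *ᵥ x with hvdef
    have hMv : M *ᵥ v = x := by
      rw [hvdef, Matrix.mulVec_mulVec, hMV, Matrix.one_mulVec]
    have hq' : v ⬝ᵥ (M *ᵥ v) = q := by
      rw [hMv, dotProduct_comm, hqdef, hvdef]
    have hXvj : ∀ j ∈ B, (X *ᵥ v) j = q := by
      intro j hj
      simp only [B, Finset.mem_filter, Finset.mem_univ, true_and] at hj
      show (fun k => X j k) ⬝ᵥ v = q
      rw [show (fun k => X j k) = x from funext hj.1, hqdef, hvdef]
    have hsub : (B.card : ℝ) * ((d i)⁻¹ * q ^ 2) ≤ ∑ j, (d j)⁻¹ * ((X *ᵥ v) j) ^ 2 := by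
      have h1 : ∑ j ∈ B, (d j)⁻¹ * ((X *ᵥ v) j) ^ 2 = (B.card : ℝ) * ((d i)⁻¹ * q ^ 2) := by
        rw [Finset.sum_congr rfl (fun j hj => ?_), Finset.sum_const, nsmul_eq_mul]
        simp only [B, Finset.mem_filter, Finset.mem_univ, true_and] at hj
        rw [hXvj j (by simp only [B, Finset.mem_filter, Finset.mem_univ, true_and]; exact hj),
          hj.2]
      rw [← h1]
      refine Finset.sum_le_sum_of_subset_of_nonneg (Finset.subset_univ B) fun j _ _ => ?_
      have hdj : 0 ≤ (d j)⁻¹ := (inv_pos.2 (hd j)).le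
      positivity
    have hnn : 0 ≤ (fun p => v (Sum.inr p)) ⬝ᵥ (S⁻¹ *ᵥ fun p => v (Sum.inr p)) := by
      have := hSinv.posSemidef.dotProduct_mulVec_nonneg (fun p => v (Sum.inr p))
      rwa [star_trivial] at this
    have := hquad v
    rw [hq'] at this
    linarith
  have hcard : 0 < (B.card : ℝ) := by
    exact_mod_cast Finset.card_pos.2 ⟨i, hiB⟩
  have hdi : 0 < (d i)⁻¹ := inv_pos.2 (hd i)
  have hbBpos : 0 < bB := by
    rw [hbBeq]; positivity
  have hbBle : bB ≤ 1 := by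
    rw [hbBeq]
    have h3 : ((B.card : ℝ) * (q * (d i)⁻¹)) * q ≤ 1 * q := by
      have he : ((B.card : ℝ) * (q * (d i)⁻¹)) * q = (B.card : ℝ) * ((d i)⁻¹ * q ^ 2) := by
        ring
      rw [he, one_mul]
      exact hkey
    exact le_of_mul_le_mul_right h3 hqpos
  have hsum : bB + bL = 1 := by
    show (∑ j ∈ B, W i j) + (∑ j ∈ Bᶜ, W i j) = 1
    rw [Finset.sum_add_sum_compl]
    exact hWrow i
  exact ⟨hbBpos, hbBle, by linarith, by linarith, by linarith⟩
end

section
/- With M = (X₂ᵀ Φ⁻¹ X₂ + Σ⁻¹)⁻¹, H₂ = X₂ M X₂ᵀ Φ⁻¹, Φ̃⁻¹ = Φ⁻¹(I_N − H₂), and H = X₁ (X₁ᵀ Φ̃⁻¹ X₁)⁻¹ X₁ᵀ Φ̃⁻¹ (the matrix X₁ᵀ Φ̃⁻¹ X₁ is invertible since X₁ has linearly independent columns and Φ̃ = Φ + X₂ Σ X₂ᵀ is positive definite), the weight matrix decomposes as W = H + H₂ (I_N − H), equivalently W = (I_N − H₂) H + H₂. -/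
open Matrix

private lemma aux_posdef_conj {N P : ℕ} (X : Matrix (Fin N) (Fin P) ℝ)
    (hX : LinearIndependent ℝ Xᵀ) {Q : Matrix (Fin N) (Fin N) ℝ} (hQ : Q.PosDef) :
    (Xᵀ * Q * X).PosDef := by
  refine Matrix.PosDef.of_dotProduct_mulVec_pos ?_ ?_
  · have := isHermitian_conjTranspose_mul_mul X hQ.isHermitian
    rwa [conjTranspose_eq_transpose_of_trivial] at this
  · intro x hx
    have hx2 : X *ᵥ x ≠ 0 := by
      intro h
      apply hx
      have hinj : Function.Injective X.mulVec := Matrix.mulVec_injective_iff.mpr hX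
      exact hinj (by simpa using h)
    have := hQ.dotProduct_mulVec_pos hx2
    simpa only [star_mulVec, dotProduct_mulVec, vecMul_vecMul,
      conjTranspose_eq_transpose_of_trivial] using this

/-- With `M = (X₂ᵀ Φ⁻¹ X₂ + Σ⁻¹)⁻¹`, `H₂ = X₂ M X₂ᵀ Φ⁻¹`,
`Φ̃⁻¹ = Φ⁻¹ (I − H₂)` and `H = X₁ (X₁ᵀ Φ̃⁻¹ X₁)⁻¹ X₁ᵀ Φ̃⁻¹`, the weight matrix decomposes
as `W = H + H₂ (I − H)`, equivalently `W = (I − H₂) H + H₂`. -/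
theorem stmt_2 (N P₁ P₂ : ℕ) (hN : 0 < N) (hP₁ : 0 < P₁) (hP₂ : 0 < P₂)
    (X₁ : Matrix (Fin N) (Fin P₁) ℝ) (X₂ : Matrix (Fin N) (Fin P₂) ℝ)
    (hX₁ : LinearIndependent ℝ X₁ᵀ)
    (d : Fin N → ℝ) (hd : ∀ i, 0 < d i)
    (S : Matrix (Fin P₂) (Fin P₂) ℝ) (hS : S.PosDef) :
    let Φ : Matrix (Fin N) (Fin N) ℝ := Matrix.diagonal d
    let X : Matrix (Fin N) (Fin P₁ ⊕ Fin P₂) ℝ := Matrix.fromCols X₁ X₂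
    let V : Matrix (Fin P₁ ⊕ Fin P₂) (Fin P₁ ⊕ Fin P₂) ℝ :=
      (Xᵀ * Φ⁻¹ * X + Matrix.fromBlocks 0 0 0 S⁻¹)⁻¹
    let W : Matrix (Fin N) (Fin N) ℝ := X * V * Xᵀ * Φ⁻¹
    let M : Matrix (Fin P₂) (Fin P₂) ℝ := (X₂ᵀ * Φ⁻¹ * X₂ + S⁻¹)⁻¹
    let H₂ : Matrix (Fin N) (Fin N) ℝ := X₂ * M * X₂ᵀ * Φ⁻¹
    let Φtinv : Matrix (Fin N) (Fin N) ℝ := Φ⁻¹ * (1 - H₂)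
    let H : Matrix (Fin N) (Fin N) ℝ := X₁ * (X₁ᵀ * Φtinv * X₁)⁻¹ * X₁ᵀ * Φtinv
    W = H + H₂ * (1 - H) ∧ W = (1 - H₂) * H + H₂ := by
  intro Φ X V W M H₂ Φtinv H
  have hΦ : Φ.PosDef := Matrix.PosDef.diagonal hd
  have hA : (Φ⁻¹).PosDef := hΦ.inv
  -- D := X₂ᵀ Φ⁻¹ X₂ + S⁻¹ is positive definite
  have hX2sd : (X₂ᵀ * Φ⁻¹ * X₂).PosSemidef := by
    have := hA.posSemidef.conjTranspose_mul_mul_same X₂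
    rwa [conjTranspose_eq_transpose_of_trivial] at this
  have hD : (X₂ᵀ * Φ⁻¹ * X₂ + S⁻¹).PosDef := Matrix.PosDef.posSemidef_add hX2sd hS.inv
  have hMD : M * (X₂ᵀ * Φ⁻¹ * X₂ + S⁻¹) = 1 :=
    Matrix.nonsing_inv_mul _ ((Matrix.isUnit_iff_isUnit_det _).mp hD.isUnit)
  have hDM : (X₂ᵀ * Φ⁻¹ * X₂ + S⁻¹) * M = 1 :=
    Matrix.mul_nonsing_inv _ ((Matrix.isUnit_iff_isUnit_det _).mp hD.isUnit)
  have hSS : S⁻¹ * S = 1 :=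
    Matrix.nonsing_inv_mul _ ((Matrix.isUnit_iff_isUnit_det _).mp hS.isUnit)
  have hAΦ : Φ⁻¹ * Φ = 1 :=
    Matrix.nonsing_inv_mul _ ((Matrix.isUnit_iff_isUnit_det _).mp hΦ.isUnit)
  -- Φ̃ := Φ + X₂ S X₂ᵀ is positive definite and Φtinv is its inverse (Woodbury)
  have hΦt : (Φ + X₂ * S * X₂ᵀ).PosDef := by
    refine hΦ.add_posSemidef ?_
    have := hS.posSemidef.mul_mul_conjTranspose_same X₂
    rwa [conjTranspose_eq_transpose_of_trivial] at this
  have hWood : Φtinv * (Φ + X₂ * S * X₂ᵀ) = 1 := by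
    show Φ⁻¹ * (1 - X₂ * M * X₂ᵀ * Φ⁻¹) * (Φ + X₂ * S * X₂ᵀ) = 1
    have key : M * ((X₂ᵀ * Φ⁻¹ * X₂) * S) = S - M := by
      have : (X₂ᵀ * Φ⁻¹ * X₂) * S = (X₂ᵀ * Φ⁻¹ * X₂ + S⁻¹) * S - 1 := by
        rw [Matrix.add_mul, hSS]; abel
      rw [this, Matrix.mul_sub, ← Matrix.mul_assoc, hMD, Matrix.one_mul, Matrix.mul_one]
    calc Φ⁻¹ * (1 - X₂ * M * X₂ᵀ * Φ⁻¹) * (Φ + X₂ * S * X₂ᵀ)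
        = Φ⁻¹ * Φ + Φ⁻¹ * (X₂ * (S - (M + M * ((X₂ᵀ * Φ⁻¹ * X₂) * S))) * X₂ᵀ) := by
          simp only [Matrix.mul_sub, Matrix.sub_mul, Matrix.mul_add, Matrix.add_mul,
            Matrix.one_mul, Matrix.mul_one, Matrix.mul_assoc, hAΦ]
          abel
      _ = 1 := by
          have hz : S - (M + M * ((X₂ᵀ * Φ⁻¹ * X₂) * S)) = 0 := by rw [key]; abel
          rw [hz, hAΦ]; simp
  have hΦtinv_eq : (Φ + X₂ * S * X₂ᵀ)⁻¹ = Φtinv := Matrix.inv_eq_left_inv hWood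
  have hΦtinvPD : Φtinv.PosDef := hΦtinv_eq ▸ hΦt.inv
  -- K := X₁ᵀ Φtinv X₁ is positive definite
  have hK : (X₁ᵀ * Φtinv * X₁).PosDef := aux_posdef_conj X₁ hX₁ hΦtinvPD
  set K' : Matrix (Fin P₁) (Fin P₁) ℝ := (X₁ᵀ * Φtinv * X₁)⁻¹ with hK'
  have hKK : (X₁ᵀ * Φtinv * X₁) * K' = 1 :=
    Matrix.mul_nonsing_inv _ ((Matrix.isUnit_iff_isUnit_det _).mp hK.isUnit)
  -- block decomposition
  set B : Matrix (Fin P₁) (Fin P₂) ℝ := X₁ᵀ * Φ⁻¹ * X₂ with hB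
  set C : Matrix (Fin P₂) (Fin P₁) ℝ := X₂ᵀ * Φ⁻¹ * X₁ with hC
  set G : Matrix (Fin P₁) (Fin P₁) ℝ := X₁ᵀ * Φ⁻¹ * X₁ with hG
  set D : Matrix (Fin P₂) (Fin P₂) ℝ := X₂ᵀ * Φ⁻¹ * X₂ + S⁻¹ with hD'
  have hKeq : X₁ᵀ * Φtinv * X₁ = G - B * M * C := by
    show X₁ᵀ * (Φ⁻¹ * (1 - X₂ * M * X₂ᵀ * Φ⁻¹)) * X₁ = G - B * M * C
    simp only [hG, hB, hC, Matrix.mul_sub, Matrix.sub_mul, Matrix.mul_one,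
      Matrix.mul_assoc]
  have hblock : Xᵀ * Φ⁻¹ * X + Matrix.fromBlocks 0 0 0 S⁻¹ = Matrix.fromBlocks G B C D := by
    show (Matrix.fromCols X₁ X₂)ᵀ * Φ⁻¹ * Matrix.fromCols X₁ X₂ +
      Matrix.fromBlocks 0 0 0 S⁻¹ = _
    rw [Matrix.transpose_fromCols, Matrix.fromRows_mul, Matrix.fromRows_mul_fromCols,
      Matrix.fromBlocks_add, hD']
    simp [hG, hB, hC]
  -- candidate inverse
  set V₀ : Matrix (Fin P₁ ⊕ Fin P₂) (Fin P₁ ⊕ Fin P₂) ℝ :=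
    Matrix.fromBlocks K' (-(K' * B * M)) (-(M * C * K')) (M + M * C * K' * B * M) with hV₀
  have hKK' : (G - B * M * C) * K' = 1 := by rw [← hKeq]; exact hKK
  have hVeq : V = V₀ := by
    show (Xᵀ * Φ⁻¹ * X + Matrix.fromBlocks 0 0 0 S⁻¹)⁻¹ = V₀
    rw [hblock]
    apply Matrix.inv_eq_right_inv
    rw [hV₀, Matrix.fromBlocks_multiply, ← Matrix.fromBlocks_one]
    have e11 : G * K' + B * -(M * C * K') = 1 := by
      calc G * K' + B * -(M * C * K') = (G - B * M * C) * K' := by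
            simp only [Matrix.sub_mul, Matrix.mul_neg, Matrix.mul_assoc]; abel
        _ = 1 := hKK'
    have e12 : G * -(K' * B * M) + B * (M + M * C * K' * B * M) = 0 := by
      calc G * -(K' * B * M) + B * (M + M * C * K' * B * M)
          = B * M - ((G - B * M * C) * K') * (B * M) := by
            simp only [Matrix.sub_mul, Matrix.mul_neg, Matrix.mul_add, Matrix.mul_one,
              Matrix.mul_assoc]; abel
        _ = 0 := by rw [hKK', Matrix.one_mul]; abel
    have e21 : C * K' + D * -(M * C * K') = 0 := by
      calc C * K' + D * -(M * C * K') = C * K' - (D * M) * (C * K') := by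
            simp only [Matrix.mul_neg, Matrix.mul_assoc]; abel
        _ = 0 := by rw [hDM, Matrix.one_mul]; abel
    have e22 : C * -(K' * B * M) + D * (M + M * C * K' * B * M) = 1 := by
      calc C * -(K' * B * M) + D * (M + M * C * K' * B * M)
          = D * M + ((D * M) * (C * (K' * (B * M))) - C * (K' * (B * M))) := by
            simp only [Matrix.mul_neg, Matrix.mul_add, Matrix.mul_assoc]; abel
        _ = 1 := by rw [hDM, Matrix.one_mul]; simp
    rw [e11, e12, e21, e22]
  -- main computation
  have hW : W = X * V₀ * Xᵀ * Φ⁻¹ := by rw [← hVeq]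
  have main : W = H + H₂ * (1 - H) := by
    rw [hW]
    show Matrix.fromCols X₁ X₂ * V₀ * (Matrix.fromCols X₁ X₂)ᵀ * Φ⁻¹ = _
    rw [Matrix.transpose_fromCols, hV₀, Matrix.fromCols_mul_fromBlocks,
      Matrix.fromCols_mul_fromRows]
    show _ = X₁ * K' * X₁ᵀ * Φtinv +
      X₂ * M * X₂ᵀ * Φ⁻¹ * (1 - X₁ * K' * X₁ᵀ * Φtinv)
    show _ = X₁ * K' * X₁ᵀ * (Φ⁻¹ * (1 - X₂ * M * X₂ᵀ * Φ⁻¹)) +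
      X₂ * M * X₂ᵀ * Φ⁻¹ * (1 - X₁ * K' * X₁ᵀ * (Φ⁻¹ * (1 - X₂ * M * X₂ᵀ * Φ⁻¹)))
    rw [hB, hC]
    simp only [Matrix.mul_sub, Matrix.sub_mul, Matrix.mul_add, Matrix.add_mul,
      Matrix.mul_one, Matrix.one_mul, Matrix.neg_mul, Matrix.mul_neg, Matrix.mul_assoc]
    abel
  refine ⟨main, ?_⟩
  rw [main]
  noncomm_ring
end

section
/- Writing V in 2×2 block form conformal with the partition X = [X₁ X₂] (so the upper-left block has size P₁×P₁), the upper-left block of V equals (X₁ᵀ Φ̃⁻¹ X₁)⁻¹, where Φ̃ = Φ + X₂ Σ X₂ᵀ. -/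
open Matrix

private lemma aux_posSemidef_conj {n p : Type*} [Fintype n] [Fintype p]
    {M : Matrix n n ℝ} (hM : M.PosSemidef) (B : Matrix n p ℝ) :
    (Bᵀ * M * B).PosSemidef := by
  simpa [Matrix.conjTranspose_eq_transpose_of_trivial] using
    hM.conjTranspose_mul_mul_same B

private lemma aux_posDef_conj {n p : Type*} [Fintype n] [Fintype p]
    {M : Matrix n n ℝ} (hM : M.PosDef) {B : Matrix n p ℝ}
    (hB : Function.Injective B.mulVec) : (Bᵀ * M * B).PosDef := by
  simpa [Matrix.conjTranspose_eq_transpose_of_trivial] using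
    hM.conjTranspose_mul_mul_same hB

/-- Writing `V` in 2×2 block form conformal with `X = [X₁ X₂]`, the upper-left
`P₁×P₁` block of `V` equals `(X₁ᵀ Φ̃⁻¹ X₁)⁻¹` where `Φ̃ = Φ + X₂ Σ X₂ᵀ`. -/
theorem stmt_5 (N P₁ P₂ : ℕ) (hN : 0 < N) (hP₁ : 0 < P₁) (hP₂ : 0 < P₂)
    (X₁ : Matrix (Fin N) (Fin P₁) ℝ) (X₂ : Matrix (Fin N) (Fin P₂) ℝ)
    (hX₁ : LinearIndependent ℝ X₁ᵀ)
    (d : Fin N → ℝ) (hd : ∀ i, 0 < d i)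
    (S : Matrix (Fin P₂) (Fin P₂) ℝ) (hS : S.PosDef) :
    let Φ : Matrix (Fin N) (Fin N) ℝ := Matrix.diagonal d
    let X : Matrix (Fin N) (Fin P₁ ⊕ Fin P₂) ℝ := Matrix.fromCols X₁ X₂
    let V : Matrix (Fin P₁ ⊕ Fin P₂) (Fin P₁ ⊕ Fin P₂) ℝ :=
      (Xᵀ * Φ⁻¹ * X + Matrix.fromBlocks 0 0 0 S⁻¹)⁻¹
    let Φt : Matrix (Fin N) (Fin N) ℝ := Φ + X₂ * S * X₂ᵀ
    V.toBlocks₁₁ = (X₁ᵀ * Φt⁻¹ * X₁)⁻¹ := by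
  intro Φ X V Φt
  have hΦ : Φ.PosDef := Matrix.posDef_diagonal_iff.mpr hd
  have hΦi : Φ⁻¹.PosDef := hΦ.inv
  have hSi : (S⁻¹).PosDef := hS.inv
  set A := X₁ᵀ * Φ⁻¹ * X₁ with hA
  set B := X₁ᵀ * Φ⁻¹ * X₂ with hB
  set C := X₂ᵀ * Φ⁻¹ * X₁ with hC
  set D := X₂ᵀ * Φ⁻¹ * X₂ + S⁻¹ with hD
  -- block decomposition of the matrix being inverted
  have hXblock : Xᵀ * Φ⁻¹ * X + Matrix.fromBlocks 0 0 0 S⁻¹ = Matrix.fromBlocks A B C D := by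
    show (Matrix.fromCols X₁ X₂)ᵀ * Φ⁻¹ * Matrix.fromCols X₁ X₂ +
        Matrix.fromBlocks 0 0 0 S⁻¹ = _
    rw [Matrix.transpose_fromCols, Matrix.fromRows_mul, Matrix.fromRows_mul_fromCols,
      Matrix.fromBlocks_add]
    simp [hA, hB, hC, hD]
  -- positive definiteness facts
  have hDpd : D.PosDef :=
    Matrix.PosDef.posSemidef_add (aux_posSemidef_conj hΦi.posSemidef X₂) hSi
  have hΦt : Φt.PosDef := hΦ.add_posSemidef (by
    simpa [Matrix.conjTranspose_eq_transpose_of_trivial] using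
      hS.posSemidef.mul_mul_conjTranspose_same X₂)
  -- Woodbury identity
  have hE : IsUnit (S⁻¹ + X₂ᵀ * Φ⁻¹ * X₂) := by
    rw [add_comm]
    exact (Matrix.PosDef.posSemidef_add (aux_posSemidef_conj hΦi.posSemidef X₂) hSi).isUnit
  have hW : Φt⁻¹ = Φ⁻¹ - Φ⁻¹ * X₂ * (S⁻¹ + X₂ᵀ * Φ⁻¹ * X₂)⁻¹ * X₂ᵀ * Φ⁻¹ :=
    Matrix.add_mul_mul_inv_eq_sub Φ X₂ S X₂ᵀ hΦ.isUnit hS.isUnit hE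
  have hDE : D = S⁻¹ + X₂ᵀ * Φ⁻¹ * X₂ := by rw [hD, add_comm]
  have hKey : X₁ᵀ * Φt⁻¹ * X₁ = A - B * D⁻¹ * C := by
    rw [hW, ← hDE, hA, hB, hC]
    simp only [Matrix.mul_sub, Matrix.sub_mul, Matrix.mul_assoc]
  have hSchur : (A - B * D⁻¹ * C).PosDef := by
    rw [← hKey]
    exact aux_posDef_conj hΦt.inv (Matrix.mulVec_injective_iff.mpr hX₁)
  -- invertibility instances
  haveI iD : Invertible D := hDpd.isUnit.invertible
  have hiD : ⅟D = D⁻¹ := Matrix.invOf_eq_nonsing_inv D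
  haveI iS : Invertible (A - B * ⅟D * C) := by rw [hiD]; exact hSchur.isUnit.invertible
  haveI iM : Invertible (Matrix.fromBlocks A B C D) := Matrix.fromBlocks₂₂Invertible A B C D
  have hV : V = ⅟(Matrix.fromBlocks A B C D) := by
    show (Xᵀ * Φ⁻¹ * X + Matrix.fromBlocks 0 0 0 S⁻¹)⁻¹ = _
    rw [hXblock, Matrix.invOf_eq_nonsing_inv]
  rw [hV, Matrix.invOf_fromBlocks₂₂_eq, Matrix.toBlocks_fromBlocks₁₁,
    Matrix.invOf_eq_nonsing_inv, hiD, hKey]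
end

section
/- In the one-way design, for every Y ∈ ℝᴺ and every cluster i ∈ {1,…,J}, the fitted value for cluster i satisfies xᵢᵀ V Xᵀ Φ⁻¹ Y = (nᵢσ²/(nᵢσ² + φᵢ²) + ρ_{ii}) Ȳᵢ + Σ_{j≠i} ρ_{ij} Ȳⱼ, where ρ_{ij} = (φᵢ²/(nᵢσ² + φᵢ²)) · (τⱼ / Σ_{k=1}^{J} τ_k) and xᵢᵀ = (1, eᵢᵀ) is the row of X common to observations in cluster i (eᵢ the i-th standard basis vector of ℝᴶ). -/
open Matrix

set_option maxHeartbeats 2000000 in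
/-- In the one-way design, the fitted value for cluster `i` decomposes as
`xᵢᵀ V Xᵀ Φ⁻¹ Y = (nᵢσ²/(nᵢσ² + φᵢ²) + ρ_{ii}) Ȳᵢ + Σ_{j≠i} ρ_{ij} Ȳⱼ` with
`ρ_{ij} = (φᵢ²/(nᵢσ² + φᵢ²)) (τⱼ / Σₖ τₖ)` and `τⱼ = nⱼ/(nⱼσ² + φⱼ²)`. -/
theorem stmt_7 (J : ℕ) (hJ : 0 < J) (n : Fin J → ℕ) (hn : ∀ j, 1 ≤ n j)
    (φ : Fin J → ℝ) (hφ : ∀ j, 0 < φ j) (σ : ℝ) (hσ : 0 < σ)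
    (Y : ((j : Fin J) × Fin (n j)) → ℝ) (i : Fin J) :
    let X₁ : Matrix ((j : Fin J) × Fin (n j)) (Fin 1) ℝ := fun _ _ => 1
    let X₂ : Matrix ((j : Fin J) × Fin (n j)) (Fin J) ℝ :=
      fun m j => if m.1 = j then 1 else 0
    let X : Matrix ((j : Fin J) × Fin (n j)) (Fin 1 ⊕ Fin J) ℝ := Matrix.fromCols X₁ X₂
    let Φ : Matrix ((j : Fin J) × Fin (n j)) ((j : Fin J) × Fin (n j)) ℝ :=
      Matrix.diagonal (fun m => (φ m.1) ^ 2)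
    let V : Matrix (Fin 1 ⊕ Fin J) (Fin 1 ⊕ Fin J) ℝ :=
      (Xᵀ * Φ⁻¹ * X +
        Matrix.fromBlocks 0 0 0 ((σ ^ 2)⁻¹ • (1 : Matrix (Fin J) (Fin J) ℝ)))⁻¹
    let τ : Fin J → ℝ := fun j => (n j : ℝ) / ((n j : ℝ) * σ ^ 2 + (φ j) ^ 2)
    let ρ : Fin J → Fin J → ℝ := fun i' j =>
      ((φ i') ^ 2 / ((n i' : ℝ) * σ ^ 2 + (φ i') ^ 2)) * (τ j / ∑ k, τ k)
    let Ybar : Fin J → ℝ := fun j => (∑ k : Fin (n j), Y ⟨j, k⟩) / (n j : ℝ)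
    -- the common row of X for observations in cluster i
    let x : Fin 1 ⊕ Fin J → ℝ := Sum.elim (fun _ => 1) (fun j => if j = i then 1 else 0)
    x ⬝ᵥ ((V * Xᵀ * Φ⁻¹) *ᵥ Y) =
      ((n i : ℝ) * σ ^ 2 / ((n i : ℝ) * σ ^ 2 + (φ i) ^ 2) + ρ i i) * Ybar i +
        ∑ j ∈ Finset.univ \ {i}, ρ i j * Ybar j := by
  intro X₁ X₂ X Φ V τ ρ Ybar x
  classical
  have hFinJ : Nonempty (Fin J) := ⟨⟨0, hJ⟩⟩
  have hxval : x = Sum.elim (fun _ => 1) (fun j => if j = i then 1 else 0) := rfl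
  have hτd : ∀ j, τ j = (n j : ℝ) / ((n j : ℝ) * σ ^ 2 + (φ j) ^ 2) := fun _ => rfl
  have hρd : ∀ i' j, ρ i' j =
      ((φ i') ^ 2 / ((n i' : ℝ) * σ ^ 2 + (φ i') ^ 2)) * (τ j / ∑ k, τ k) :=
    fun _ _ => rfl
  have hnpos : ∀ j, (0:ℝ) < (n j : ℝ) := fun j => by exact_mod_cast hn j
  have hφ2 : ∀ j, (0:ℝ) < φ j ^ 2 := fun j => pow_pos (hφ j) 2
  have hσ2 : (0:ℝ) < σ ^ 2 := by positivity
  have hden : ∀ j, (0:ℝ) < (n j : ℝ) * σ ^ 2 + φ j ^ 2 := fun j =>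
    add_pos_of_nonneg_of_pos (by positivity) (hφ2 j)
  have hτpos : ∀ j, 0 < τ j := fun j => by
    rw [hτd]; exact div_pos (hnpos j) (hden j)
  have hSpos : 0 < ∑ k, τ k := Finset.sum_pos (fun k _ => hτpos k) Finset.univ_nonempty
  set S : ℝ := ∑ k, τ k with hSdef
  set μ : ℝ := (∑ j, τ j * Ybar j) / S with hμdef
  have hμS : μ * S = ∑ j, τ j * Ybar j := div_mul_cancel₀ _ hSpos.ne'
  set lam : Fin J → ℝ := fun j => (n j : ℝ) * σ ^ 2 / ((n j : ℝ) * σ ^ 2 + φ j ^ 2)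
    with hlam
  set w : Fin 1 ⊕ Fin J → ℝ :=
    Sum.elim (fun _ => μ) (fun j => lam j * (Ybar j - μ)) with hw
  set A : Matrix (Fin 1 ⊕ Fin J) (Fin 1 ⊕ Fin J) ℝ :=
      Xᵀ * Φ⁻¹ * X +
        Matrix.fromBlocks 0 0 0 ((σ ^ 2)⁻¹ • (1 : Matrix (Fin J) (Fin J) ℝ)) with hA
  have hV : V = A⁻¹ := rfl
  have hYbard : ∀ j, Ybar j = (∑ k : Fin (n j), Y ⟨j, k⟩) / (n j : ℝ) := fun _ => rfl
  -- the inverse of Φ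
  have hΦinv : Φ⁻¹ = Matrix.diagonal (fun m => ((φ m.1) ^ 2)⁻¹) := by
    apply Matrix.inv_eq_right_inv
    rw [Matrix.diagonal_mul_diagonal]
    have h1 : (fun m : (j : Fin J) × Fin (n j) => φ m.1 ^ 2 * (φ m.1 ^ 2)⁻¹)
        = fun _ => (1:ℝ) := funext fun m => mul_inv_cancel₀ (hφ2 m.1).ne'
    rw [h1, Matrix.diagonal_one]
  have hwd : ∀ j, w (Sum.inr j) = lam j * (Ybar j - μ) := fun _ => rfl
  have hwl : w (Sum.inl 0) = μ := rfl
  clear_value τ ρ Ybar x μ S lam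
  -- action of X on a coefficient vector
  have hXv : ∀ (v : Fin 1 ⊕ Fin J → ℝ) m,
      (X *ᵥ v) m = v (Sum.inl 0) + v (Sum.inr m.1) := by
    intro v m
    simp [X, X₁, X₂, Matrix.mulVec, dotProduct, Fintype.sum_sum_type,
      Matrix.fromCols, ite_mul]
  -- action of Xᵀ
  have hXTl : ∀ (u : ((j : Fin J) × Fin (n j)) → ℝ),
      (Xᵀ *ᵥ u) (Sum.inl 0) = ∑ j, ∑ k : Fin (n j), u ⟨j, k⟩ := by
    intro u
    simp only [Matrix.mulVec, dotProduct]
    rw [← Finset.univ_sigma_univ, Finset.sum_sigma]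
    simp [X, X₁, Matrix.fromCols]
  have hXTr : ∀ (u : ((j : Fin J) × Fin (n j)) → ℝ) (j : Fin J),
      (Xᵀ *ᵥ u) (Sum.inr j) = ∑ k : Fin (n j), u ⟨j, k⟩ := by
    intro u j
    simp only [Matrix.mulVec, dotProduct]
    rw [← Finset.univ_sigma_univ, Finset.sum_sigma]
    simp only [Matrix.transpose_apply, X, X₂, Matrix.fromCols,
      Matrix.of_apply, Sum.elim_inr, ite_mul, one_mul, zero_mul]
    rw [Finset.sum_eq_single j]
    · simp
    · intro b _ hb
      simp [hb]
    · intro h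
      exact absurd (Finset.mem_univ j) h
  -- mean of Y over cluster j
  have hYsum : ∀ j, ∑ k : Fin (n j), Y ⟨j, k⟩ = (n j : ℝ) * Ybar j := by
    intro j
    rw [hYbard j, mul_div_cancel₀ _ (hnpos j).ne']
  have hΦY : ∀ (u : ((j : Fin J) × Fin (n j)) → ℝ) (m : (j : Fin J) × Fin (n j)),
      (Φ⁻¹ *ᵥ u) m = ((φ m.1) ^ 2)⁻¹ * u m := by
    intro u m
    rw [hΦinv, Matrix.mulVec_diagonal]
  have hXw : X *ᵥ w = fun m => μ + lam m.1 * (Ybar m.1 - μ) := by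
    funext m
    rw [hXv w m, hwl, hwd]
  have hBw : (Matrix.fromBlocks 0 0 0
        ((σ ^ 2)⁻¹ • (1 : Matrix (Fin J) (Fin J) ℝ)) : Matrix _ _ ℝ) *ᵥ w =
      Sum.elim (fun _ : Fin 1 => (0:ℝ))
        (fun j => (σ ^ 2)⁻¹ * (lam j * (Ybar j - μ))) := by
    rw [hw, Matrix.fromBlocks_mulVec]
    simp only [Matrix.zero_mulVec, add_zero, zero_add, Matrix.smul_mulVec,
      Matrix.one_mulVec]
    rfl
  have hzero : ∑ j, τ j * (μ - Ybar j) = 0 := by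
    simp only [mul_sub]
    rw [Finset.sum_sub_distrib, ← Finset.sum_mul, ← hSdef, sub_eq_zero, ← hμS]
    ring
  -- the key linear system
  have hAw : A *ᵥ w = Xᵀ *ᵥ (Φ⁻¹ *ᵥ Y) := by
    rw [hA, Matrix.add_mulVec, ← Matrix.mulVec_mulVec, ← Matrix.mulVec_mulVec, hXw, hBw]
    funext s
    cases s with
    | inl a =>
      have ha : a = 0 := Subsingleton.elim _ _
      subst ha
      rw [Pi.add_apply, hXTl, hXTl, Sum.elim_inl, add_zero, ← sub_eq_zero,
        ← Finset.sum_sub_distrib, ← hzero]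
      apply Finset.sum_congr rfl
      intro j _
      simp only [hΦY]
      rw [Finset.sum_const, Finset.card_univ, Fintype.card_fin, nsmul_eq_mul,
        ← Finset.mul_sum, hYsum, hτd, hlam]
      field_simp [(hden j).ne', (hφ2 j).ne', hσ2.ne', (hφ j).ne']
      ring
    | inr j =>
      rw [Pi.add_apply, hXTr, hXTr, Sum.elim_inr]
      simp only [hΦY]
      rw [Finset.sum_const, Finset.card_univ, Fintype.card_fin, nsmul_eq_mul,
        ← Finset.mul_sum, hYsum, hlam]
      field_simp [(hden j).ne', (hφ2 j).ne', hσ2.ne', (hφ j).ne']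
      ring
  -- A is positive definite, hence invertible
  have hApd : A.PosDef := by
    refine Matrix.PosDef.of_dotProduct_mulVec_pos ?_ ?_
    · rw [Matrix.IsHermitian, Matrix.conjTranspose_eq_transpose_of_trivial, hA,
        Matrix.transpose_add, Matrix.transpose_mul, Matrix.transpose_mul,
        Matrix.transpose_transpose, hΦinv, Matrix.diagonal_transpose,
        Matrix.fromBlocks_transpose]
      congr 1
      · rw [Matrix.mul_assoc]
      · simp [Matrix.transpose_smul]
    · intro v hv
      have hstar : star v = v := by
        funext s; simp
      rw [hstar, hA, Matrix.add_mulVec, dotProduct_add]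
      have hT1 : v ⬝ᵥ ((Xᵀ * Φ⁻¹ * X) *ᵥ v) =
          ∑ m : (j : Fin J) × Fin (n j), ((φ m.1) ^ 2)⁻¹ * ((X *ᵥ v) m) ^ 2 := by
        rw [← Matrix.mulVec_mulVec, ← Matrix.mulVec_mulVec, Matrix.dotProduct_mulVec,
          Matrix.vecMul_transpose, dotProduct]
        apply Finset.sum_congr rfl
        intro m _
        rw [hΦY]
        ring
      have hT2 : v ⬝ᵥ ((Matrix.fromBlocks 0 0 0
            ((σ ^ 2)⁻¹ • (1 : Matrix (Fin J) (Fin J) ℝ)) : Matrix _ _ ℝ) *ᵥ v) =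
          (σ ^ 2)⁻¹ * ∑ j, v (Sum.inr j) ^ 2 := by
        rw [show v = Sum.elim (fun a : Fin 1 => v (Sum.inl a)) (fun j => v (Sum.inr j))
          from by funext s; cases s <;> rfl]
        rw [Matrix.fromBlocks_mulVec]
        simp only [Matrix.zero_mulVec, add_zero, zero_add, Matrix.smul_mulVec,
          Matrix.one_mulVec, dotProduct, Fintype.sum_sum_type, Sum.elim_inl,
          Sum.elim_inr, Pi.smul_apply, smul_eq_mul, Pi.zero_apply, mul_zero,
          Finset.sum_const_zero]
        rw [Finset.mul_sum]
        apply Finset.sum_congr rfl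
        intro j _
        simp only [Function.comp_apply, Sum.elim_inr]
        ring
      rw [hT1, hT2]
      by_cases hu : ∀ j, v (Sum.inr j) = 0
      · have hv0 : v (Sum.inl 0) ≠ 0 := by
          intro h0
          apply hv
          funext s
          cases s with
          | inl a =>
            have : a = 0 := Subsingleton.elim _ _
            rw [this]; exact h0
          | inr j => exact hu j
        have hXvm : ∀ m, (X *ᵥ v) m = v (Sum.inl 0) := by
          intro m
          rw [hXv, hu, add_zero]
        apply add_pos_of_pos_of_nonneg
        · apply Finset.sum_pos'
          · intro m _
            positivity
          · refine ⟨⟨⟨0, hJ⟩, ⟨0, hn _⟩⟩, Finset.mem_univ _, ?_⟩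
            rw [hXvm]
            exact mul_pos (inv_pos.mpr (hφ2 _))
              (lt_of_le_of_ne (sq_nonneg _) (Ne.symm (pow_ne_zero 2 hv0)))
        · apply mul_nonneg (le_of_lt (by positivity))
          apply Finset.sum_nonneg
          intro j _
          positivity
      · push_neg at hu
        obtain ⟨j0, hj0⟩ := hu
        apply add_pos_of_nonneg_of_pos
        · apply Finset.sum_nonneg
          intro m _
          positivity
        · apply mul_pos (by positivity)
          apply Finset.sum_pos'
          · intro j _; positivity
          · exact ⟨j0, Finset.mem_univ _,
              lt_of_le_of_ne (sq_nonneg _) (Ne.symm (pow_ne_zero 2 hj0))⟩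
  have hVA : V * A = 1 := by
    rw [hV]
    exact Matrix.nonsing_inv_mul A (isUnit_iff_ne_zero.mpr hApd.det_pos.ne')
  -- reduce the LHS to x ⬝ᵥ w
  have hLHS : (V * Xᵀ * Φ⁻¹) *ᵥ Y = w := by
    rw [← Matrix.mulVec_mulVec, ← Matrix.mulVec_mulVec, ← hAw,
      Matrix.mulVec_mulVec, hVA, Matrix.one_mulVec]
  rw [hLHS]
  -- compute x ⬝ᵥ w
  have hxw : x ⬝ᵥ w = μ + lam i * (Ybar i - μ) := by
    rw [dotProduct, Fintype.sum_sum_type, hxval, hw]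
    simp [Fin.sum_univ_one, ite_mul]
  rw [hxw]
  -- final scalar identity
  clear * - hlam hρd hτd hμdef hSpos hden
  have hsum : ∑ j ∈ Finset.univ \ {i}, ρ i j * Ybar j =
      (∑ j, ρ i j * Ybar j) - ρ i i * Ybar i := by
    rw [Finset.sum_sdiff_eq_sub (Finset.subset_univ _), Finset.sum_singleton]
  have hρsum : ∑ j, ρ i j * Ybar j =
      ((φ i) ^ 2 / ((n i : ℝ) * σ ^ 2 + (φ i) ^ 2)) * μ := by
    calc ∑ j, ρ i j * Ybar j
        = ∑ j, (((φ i) ^ 2 / ((n i : ℝ) * σ ^ 2 + (φ i) ^ 2)) / S) *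
            (τ j * Ybar j) := Finset.sum_congr rfl fun j _ => by rw [hρd]; ring
      _ = (((φ i) ^ 2 / ((n i : ℝ) * σ ^ 2 + (φ i) ^ 2)) / S) *
            ∑ j, τ j * Ybar j := by rw [Finset.mul_sum]
      _ = ((φ i) ^ 2 / ((n i : ℝ) * σ ^ 2 + (φ i) ^ 2)) * μ := by
            rw [hμdef]; ring
  rw [hsum, hρsum]
  simp only [hlam, hρd, hτd]
  field_simp [(hden i).ne', hSpos.ne']
  ring
end

section
/- In the one-way design, the upper-left 1×1 block of V (the entry of V corresponding to the intercept column X₁) equals (Σ_{j=1}^{J} τⱼ)⁻¹. -/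
open Matrix

/-- In the one-way design, the upper-left 1×1 block of `V` (the entry
corresponding to the intercept column `X₁`) equals `(Σⱼ τⱼ)⁻¹` with `τⱼ = nⱼ/(nⱼσ² + φⱼ²)`. -/
theorem stmt_8 (J : ℕ) (hJ : 0 < J) (n : Fin J → ℕ) (hn : ∀ j, 1 ≤ n j)
    (φ : Fin J → ℝ) (hφ : ∀ j, 0 < φ j) (σ : ℝ) (hσ : 0 < σ) :
    let X₁ : Matrix ((j : Fin J) × Fin (n j)) (Fin 1) ℝ := fun _ _ => 1
    let X₂ : Matrix ((j : Fin J) × Fin (n j)) (Fin J) ℝ :=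
      fun m j => if m.1 = j then 1 else 0
    let X : Matrix ((j : Fin J) × Fin (n j)) (Fin 1 ⊕ Fin J) ℝ := Matrix.fromCols X₁ X₂
    let Φ : Matrix ((j : Fin J) × Fin (n j)) ((j : Fin J) × Fin (n j)) ℝ :=
      Matrix.diagonal (fun m => (φ m.1) ^ 2)
    let V : Matrix (Fin 1 ⊕ Fin J) (Fin 1 ⊕ Fin J) ℝ :=
      (Xᵀ * Φ⁻¹ * X +
        Matrix.fromBlocks 0 0 0 ((σ ^ 2)⁻¹ • (1 : Matrix (Fin J) (Fin J) ℝ)))⁻¹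
    let τ : Fin J → ℝ := fun j => (n j : ℝ) / ((n j : ℝ) * σ ^ 2 + (φ j) ^ 2)
    V.toBlocks₁₁ 0 0 = (∑ j, τ j)⁻¹ := by
  intro X₁ X₂ X Φ V τ
  have hφ2 : ∀ j, (φ j) ^ 2 ≠ 0 := fun j => pow_ne_zero 2 (hφ j).ne'
  have hσ2 : (σ:ℝ) ^ 2 ≠ 0 := pow_ne_zero 2 hσ.ne'
  set a : Fin J → ℝ := fun j => (n j : ℝ) / φ j ^ 2 with ha
  set d : Fin J → ℝ := fun j => a j + (σ ^ 2)⁻¹ with hdd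
  have hnpos : ∀ j, (0:ℝ) < n j := fun j => by exact_mod_cast (hn j)
  have hapos : ∀ j, 0 < a j := fun j => div_pos (hnpos j) (pow_pos (hφ j) 2)
  have hdpos : ∀ j, 0 < d j := fun j => add_pos (hapos j) (inv_pos.mpr (pow_pos hσ 2))
  clear_value a d
  have hdne : ∀ j, d j ≠ 0 := fun j => (hdpos j).ne'
  have hτ : ∀ j, τ j = a j - a j ^ 2 / d j := by
    intro j
    have hden : (0:ℝ) < (n j : ℝ) * σ ^ 2 + φ j ^ 2 :=
      add_pos (mul_pos (hnpos j) (pow_pos hσ 2)) (pow_pos (hφ j) 2)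
    have hd' := hdne j
    rw [hdd] at hd'
    simp only [τ, ha, hdd] at *
    field_simp [(hφ j).ne', hσ.ne', hden.ne']
    ring
  have hSpos : 0 < ∑ j, τ j := by
    apply Finset.sum_pos
    · intro j _
      have hden : (0:ℝ) < (n j : ℝ) * σ ^ 2 + φ j ^ 2 :=
        add_pos (mul_pos (hnpos j) (pow_pos hσ 2)) (pow_pos (hφ j) 2)
      exact div_pos (hnpos j) hden
    · haveI : Nonempty (Fin J) := Fin.pos_iff_nonempty.mp hJ
      exact Finset.univ_nonempty
  set S : ℝ := ∑ j, τ j with hS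
  clear_value S
  have hSne : S ≠ 0 := hSpos.ne'
  have hΦinv : Φ⁻¹ = Matrix.diagonal (fun m => ((φ m.1) ^ 2)⁻¹) := by
    apply inv_eq_right_inv
    rw [show Φ = Matrix.diagonal (fun m => (φ m.1)^2) from rfl,
      Matrix.diagonal_mul_diagonal]
    simp [hφ2]
  set M : Matrix (Fin 1 ⊕ Fin J) (Fin 1 ⊕ Fin J) ℝ :=
    Xᵀ * Φ⁻¹ * X + Matrix.fromBlocks 0 0 0 ((σ ^ 2)⁻¹ • (1 : Matrix (Fin J) (Fin J) ℝ)) with hM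
  have hMblocks : M = Matrix.fromBlocks
      (Matrix.of fun _ _ => ∑ j, a j)
      (Matrix.of fun _ k => a k)
      (Matrix.of fun j _ => a j)
      (Matrix.diagonal d) := by
    rw [hM, hΦinv]
    ext p q
    rcases p with p | p <;> rcases q with q | q <;>
      simp only [Matrix.add_apply, Matrix.mul_apply, Matrix.mul_diagonal,
        Matrix.transpose_apply, Matrix.fromBlocks_apply₁₁, Matrix.fromBlocks_apply₁₂,
        Matrix.fromBlocks_apply₂₁, Matrix.fromBlocks_apply₂₂, Matrix.zero_apply,
        Matrix.smul_apply, Matrix.one_apply, Matrix.of_apply, X,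
        Matrix.fromCols_apply_inl, Matrix.fromCols_apply_inr] <;>
      rw [← Finset.univ_sigma_univ, Finset.sum_sigma] <;>
      simp [X₁, X₂, ha, hdd, Matrix.diagonal_apply, Finset.sum_ite_eq, mul_comm,
        div_eq_mul_inv, Finset.sum_ite_eq', smul_eq_mul]
    rcases eq_or_ne p q with h | h
    · subst h; simp
    · simp [h, h.symm]
  set A : ℝ := ∑ j, a j with hA
  set T : ℝ := ∑ j, a j ^ 2 / d j with hT
  clear_value A T
  have key : S⁻¹ * (A - T) = 1 := by
    have hAT : A - T = S := by
      rw [hA, hT, hS, ← Finset.sum_sub_distrib]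
      exact Finset.sum_congr rfl fun j _ => (hτ j).symm
    rw [hAT]
    exact inv_mul_cancel₀ hSne
  set W : Matrix (Fin 1 ⊕ Fin J) (Fin 1 ⊕ Fin J) ℝ := Matrix.fromBlocks
      (Matrix.of fun _ _ => S⁻¹)
      (Matrix.of fun _ k => -(S⁻¹ * a k / d k))
      (Matrix.of fun j _ => -(S⁻¹ * a j / d j))
      (Matrix.of fun j k => (if j = k then (d j)⁻¹ else 0) + S⁻¹ * a j * a k / (d j * d k))
      with hW
  have hMW : M * W = 1 := by
    rw [hMblocks, hW, Matrix.fromBlocks_multiply, ← Matrix.fromBlocks_one]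
    have h11 : (Matrix.of fun (_ : Fin 1) (_ : Fin 1) => A) * (Matrix.of fun _ _ => S⁻¹) +
        (Matrix.of fun (_ : Fin 1) k => a k) * (Matrix.of fun j (_ : Fin 1) => -(S⁻¹ * a j / d j)) =
        (1 : Matrix (Fin 1) (Fin 1) ℝ) := by
      ext p q
      have h2 : ∑ k, a k * -(S⁻¹ * a k / d k) = -(S⁻¹ * T) := by
        rw [hT, Finset.mul_sum, ← Finset.sum_neg_distrib]
        exact Finset.sum_congr rfl fun k _ => by ring
      simp only [Matrix.add_apply, Matrix.mul_apply, Matrix.of_apply, Fin.sum_univ_one,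
        Matrix.one_apply, h2]
      rw [if_pos (Subsingleton.elim p q)]
      linear_combination key
    have h12 : (Matrix.of fun (_ : Fin 1) (_ : Fin 1) => A) *
          (Matrix.of fun (_ : Fin 1) k => -(S⁻¹ * a k / d k)) +
        (Matrix.of fun (_ : Fin 1) k => a k) *
          (Matrix.of fun j k => (if j = k then (d j)⁻¹ else 0) + S⁻¹ * a j * a k / (d j * d k)) =
        (0 : Matrix (Fin 1) (Fin J) ℝ) := by
      ext p k
      have h3 : ∑ j, a j * ((if j = k then (d j)⁻¹ else 0) + S⁻¹ * a j * a k / (d j * d k)) =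
          a k / d k + S⁻¹ * a k / d k * T := by
        have : ∀ j ∈ Finset.univ, a j * ((if j = k then (d j)⁻¹ else 0) + S⁻¹ * a j * a k / (d j * d k)) =
            (if j = k then a k / d k else 0) + S⁻¹ * a k / d k * (a j ^ 2 / d j) := by
          intro j _
          rcases eq_or_ne j k with h | h
          · subst h; rw [if_pos rfl, if_pos rfl]; ring
          · rw [if_neg h, if_neg h]; ring
        rw [Finset.sum_congr rfl this, Finset.sum_add_distrib, Finset.sum_ite_eq' Finset.univ k,
          hT, Finset.mul_sum]
        simp
      simp only [Matrix.add_apply, Matrix.mul_apply, Matrix.of_apply, Fin.sum_univ_one,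
        Matrix.zero_apply, h3]
      linear_combination (-(a k / d k)) * key
    have h21 : (Matrix.of fun j (_ : Fin 1) => a j) * (Matrix.of fun (_ : Fin 1) (_ : Fin 1) => S⁻¹) +
        (Matrix.diagonal d) * (Matrix.of fun j (_ : Fin 1) => -(S⁻¹ * a j / d j)) =
        (0 : Matrix (Fin J) (Fin 1) ℝ) := by
      ext j p
      simp only [Matrix.add_apply, Matrix.mul_apply, Matrix.of_apply, Fin.sum_univ_one,
        Matrix.zero_apply, Matrix.diagonal_apply, ite_mul, zero_mul, Finset.sum_ite_eq,
        Finset.mem_univ, if_pos]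
      linear_combination (-(S⁻¹ * a j)) * (mul_inv_cancel₀ (hdne j))
    have h22 : (Matrix.of fun j (_ : Fin 1) => a j) * (Matrix.of fun (_ : Fin 1) k => -(S⁻¹ * a k / d k)) +
        (Matrix.diagonal d) *
          (Matrix.of fun j k => (if j = k then (d j)⁻¹ else 0) + S⁻¹ * a j * a k / (d j * d k)) =
        (1 : Matrix (Fin J) (Fin J) ℝ) := by
      ext j k
      simp only [Matrix.add_apply, Matrix.mul_apply, Matrix.of_apply, Fin.sum_univ_one,
        Matrix.one_apply, Matrix.diagonal_apply, ite_mul, zero_mul, Finset.sum_ite_eq,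
        Finset.mem_univ, if_pos]
      rcases eq_or_ne j k with h | h
      · subst h
        simp only [eq_self_iff_true, if_true, if_pos rfl]
        linear_combination (1 + S⁻¹ * a j ^ 2 * (d j)⁻¹) * (mul_inv_cancel₀ (hdne j))
      · simp only [if_neg h]
        linear_combination (S⁻¹ * a j * a k * (d k)⁻¹) * (mul_inv_cancel₀ (hdne j))
    rw [h11, h12, h21, h22]
  have hV : V = W := by
    have : V = M⁻¹ := rfl
    rw [this, inv_eq_right_inv hMW]
  rw [hV, hW]
  simp [Matrix.toBlocks_fromBlocks₁₁, hS]
end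

section
/- Let B ⊂ {1,…,N} be a set of n_j ≥ 1 indices whose rows of X are all equal to a common vector xⱼᵀ and whose diagonal entries of Φ all equal a common φⱼ². Let X₋, Φ₋, Y₋ denote X, Φ, Y with the rows (and corresponding diagonal entries) in B deleted, and assume X₋'s first P₁ columns (the retained rows of X₁) have linearly independent columns so that V₋ = (X₋ᵀ Φ₋⁻¹ X₋ + blockDiag(0_{P₁×P₁}, Σ⁻¹))⁻¹ exists and is positive definite. Set β̂ = V Xᵀ Φ⁻¹ Y, β̂₋ = V₋ X₋ᵀ Φ₋⁻¹ Y₋, Ŷⱼ = xⱼᵀ β̂, and let Ȳⱼ be the mean of the entries of Y with indices in B. Then (n_j/φⱼ²) xⱼᵀ V xⱼ < 1 and β̂₋ = β̂ + (n_j/φⱼ²) · (Ŷⱼ − Ȳⱼ)/(1 − (n_j/φⱼ²) xⱼᵀ V xⱼ) · V xⱼ. -/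
open Matrix

private lemma splitsum {N : ℕ} (B : Finset (Fin N)) (f : Fin N → ℝ) :
    ∑ m, f m = ∑ m ∈ B, f m + ∑ m : {m : Fin N // m ∉ B}, f m.1 := by
  rw [← Fintype.sum_subtype_add_sum_subtype (· ∈ B) f]
  congr 1
  exact (Finset.sum_subtype B (fun x => Iff.rfl) f).symm

private lemma my_vecMulVec_mulVec {n : Type*} [Fintype n] (w v x : n → ℝ) :
    vecMulVec w v *ᵥ x = (v ⬝ᵥ x) • w := by
  ext i
  simp only [vecMulVec, mulVec, dotProduct, Pi.smul_apply, smul_eq_mul, Finset.sum_mul,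
    Matrix.of_apply, Finset.mul_sum]
  exact Finset.sum_congr rfl fun m _ => by ring

private lemma my_posDef_add_posSemidef {n : Type*} [Fintype n] {A C : Matrix n n ℝ}
    (hA : A.PosDef) (hC : C.PosSemidef) : (A + C).PosDef :=
  hA.add_posSemidef hC

private lemma my_smul_vmv_psd {n : Type*} [Fintype n] (c : ℝ) (hc : 0 ≤ c) (x : n → ℝ) :
    (c • vecMulVec x x).PosSemidef := by
  have := (posSemidef_vecMulVec_self_star x).smul hc
  simpa using this

private lemma tri_apply {n p : Type*} [Fintype n] [DecidableEq n] (M : Matrix n p ℝ)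
    (e : n → ℝ) (k l : p) :
    (Mᵀ * Matrix.diagonal e * M) k l = ∑ m, (e m) * (M m k * M m l) := by
  rw [Matrix.mul_assoc, Matrix.mul_apply]
  refine Finset.sum_congr rfl fun m _ => ?_
  rw [Matrix.mul_apply]
  simp [Matrix.diagonal_apply, transpose_apply]
  ring

private lemma trv_apply {n p : Type*} [Fintype n] [DecidableEq n] (M : Matrix n p ℝ)
    (e : n → ℝ) (Y : n → ℝ) (k : p) :
    ((Mᵀ * Matrix.diagonal e) *ᵥ Y) k = ∑ m, (e m) * (M m k * Y m) := by
  simp only [mulVec, dotProduct, Matrix.mul_diagonal, transpose_apply]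
  exact Finset.sum_congr rfl fun m _ => by ring

private lemma diag_inv {n : Type*} [Fintype n] [DecidableEq n] (e : n → ℝ) (he : ∀ i, e i ≠ 0) :
    (Matrix.diagonal e)⁻¹ = Matrix.diagonal (fun i => (e i)⁻¹) := by
  apply Matrix.inv_eq_right_inv
  rw [Matrix.diagonal_mul_diagonal]
  have : (fun i => e i * (e i)⁻¹) = fun _ => (1:ℝ) := funext fun i => mul_inv_cancel₀ (he i)
  rw [this, Matrix.diagonal_one]

/-- Deleting a cluster `B` of `n_j` identical rows (common row `xⱼᵀ`, common
noise variance `φⱼ²`), we have `(n_j/φⱼ²) xⱼᵀ V xⱼ < 1` and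
`β̂₋ = β̂ + (n_j/φⱼ²)(Ŷⱼ − Ȳⱼ)/(1 − (n_j/φⱼ²) xⱼᵀ V xⱼ) · V xⱼ`. -/
theorem stmt_10 (N P₁ P₂ : ℕ) (hN : 0 < N) (hP₁ : 0 < P₁) (hP₂ : 0 < P₂)
    (X₁ : Matrix (Fin N) (Fin P₁) ℝ) (X₂ : Matrix (Fin N) (Fin P₂) ℝ)
    (hX₁ : LinearIndependent ℝ X₁ᵀ)
    (d : Fin N → ℝ) (hd : ∀ i, 0 < d i)
    (S : Matrix (Fin P₂) (Fin P₂) ℝ) (hS : S.PosDef)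
    (Y : Fin N → ℝ)
    (B : Finset (Fin N)) (hB : B.Nonempty)
    (xj : Fin P₁ ⊕ Fin P₂ → ℝ) (φj : ℝ) (hφj : 0 < φj)
    -- all rows of X indexed by B equal the common row xⱼᵀ
    (hrow : ∀ m ∈ B, ∀ k, Matrix.fromCols X₁ X₂ m k = xj k)
    -- all diagonal entries of Φ indexed by B equal the common φⱼ²
    (hdB : ∀ m ∈ B, d m = φj ^ 2)
    -- V₋ exists and is positive definite
    (hVm : (((Matrix.fromCols X₁ X₂).submatrix
          (Subtype.val : {m : Fin N // m ∉ B} → Fin N) id)ᵀ *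
        (Matrix.diagonal fun m : {m : Fin N // m ∉ B} => d m.1)⁻¹ *
        ((Matrix.fromCols X₁ X₂).submatrix
          (Subtype.val : {m : Fin N // m ∉ B} → Fin N) id) +
        Matrix.fromBlocks 0 0 0 S⁻¹)⁻¹.PosDef) :
    let Φ : Matrix (Fin N) (Fin N) ℝ := Matrix.diagonal d
    let X : Matrix (Fin N) (Fin P₁ ⊕ Fin P₂) ℝ := Matrix.fromCols X₁ X₂
    let V : Matrix (Fin P₁ ⊕ Fin P₂) (Fin P₁ ⊕ Fin P₂) ℝ :=
      (Xᵀ * Φ⁻¹ * X + Matrix.fromBlocks 0 0 0 S⁻¹)⁻¹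
    let Xm : Matrix {m : Fin N // m ∉ B} (Fin P₁ ⊕ Fin P₂) ℝ :=
      X.submatrix (Subtype.val : {m : Fin N // m ∉ B} → Fin N) id
    let Φm : Matrix {m : Fin N // m ∉ B} {m : Fin N // m ∉ B} ℝ :=
      Matrix.diagonal fun m : {m : Fin N // m ∉ B} => d m.1
    let Ym : {m : Fin N // m ∉ B} → ℝ := fun m => Y m.1
    let Vm : Matrix (Fin P₁ ⊕ Fin P₂) (Fin P₁ ⊕ Fin P₂) ℝ :=
      (Xmᵀ * Φm⁻¹ * Xm + Matrix.fromBlocks 0 0 0 S⁻¹)⁻¹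
    let βhat : Fin P₁ ⊕ Fin P₂ → ℝ := (V * Xᵀ * Φ⁻¹) *ᵥ Y
    let βm : Fin P₁ ⊕ Fin P₂ → ℝ := (Vm * Xmᵀ * Φm⁻¹) *ᵥ Ym
    let nj : ℝ := (B.card : ℝ)
    let Yhatj : ℝ := xj ⬝ᵥ βhat
    let Ybarj : ℝ := (∑ m ∈ B, Y m) / nj
    nj / φj ^ 2 * (xj ⬝ᵥ V *ᵥ xj) < 1 ∧
    βm = βhat +
      ((nj / φj ^ 2) * (Yhatj - Ybarj) / (1 - nj / φj ^ 2 * (xj ⬝ᵥ V *ᵥ xj))) • (V *ᵥ xj) := by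
  intro Φ X V Xm Φm Ym Vm βhat βm nj Yhatj Ybarj
  -- basic abbreviations
  set A : Matrix (Fin P₁ ⊕ Fin P₂) (Fin P₁ ⊕ Fin P₂) ℝ :=
    Xᵀ * Φ⁻¹ * X + Matrix.fromBlocks 0 0 0 S⁻¹ with hAdef
  have hV : V = A⁻¹ := rfl
  set Am : Matrix (Fin P₁ ⊕ Fin P₂) (Fin P₁ ⊕ Fin P₂) ℝ :=
    Xmᵀ * Φm⁻¹ * Xm + Matrix.fromBlocks 0 0 0 S⁻¹ with hAmdef
  have hVmdef : Vm = Am⁻¹ := rfl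
  set c : ℝ := nj / φj ^ 2 with hcdef
  have hφj2 : (0:ℝ) < φj ^ 2 := by positivity
  have hnj : (0:ℝ) < nj := by
    simp only [nj]
    exact_mod_cast Finset.card_pos.mpr hB
  have hc : 0 < c := by positivity
  have hAmpd : Am.PosDef := Matrix.posDef_inv_iff.mp hVm
  have hrow' : ∀ m ∈ B, ∀ k, X m k = xj k := hrow
  have hXm : ∀ (m : {m : Fin N // m ∉ B}) (k : Fin P₁ ⊕ Fin P₂), Xm m k = X m.1 k :=
    fun _ _ => rfl
  have hΦinv : Φ⁻¹ = Matrix.diagonal (fun m => (d m)⁻¹) :=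
    diag_inv d (fun i => (hd i).ne')
  have hΦminv : Φm⁻¹ = Matrix.diagonal (fun m : {m : Fin N // m ∉ B} => (d m.1)⁻¹) :=
    diag_inv _ (fun i => (hd i.1).ne')
  -- split A = Am + c • xⱼxⱼᵀ
  have hsplit : A = Am + c • vecMulVec xj xj := by
    rw [hAdef, hAmdef, hΦinv, hΦminv]
    ext k l
    simp only [Matrix.add_apply, Matrix.smul_apply, Matrix.vecMulVec_apply, smul_eq_mul]
    rw [tri_apply, tri_apply]
    rw [splitsum B (fun m => (d m)⁻¹ * (X m k * X m l))]
    have hBpart : ∑ m ∈ B, (d m)⁻¹ * (X m k * X m l) = c * (xj k * xj l) := by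
      have : ∀ m ∈ B, (d m)⁻¹ * (X m k * X m l) = (φj ^ 2)⁻¹ * (xj k * xj l) := by
        intro m hm
        rw [hdB m hm, hrow' m hm k, hrow' m hm l]
      rw [Finset.sum_congr rfl this, Finset.sum_const, nsmul_eq_mul]
      rw [hcdef]
      field_simp
      simp only [nj]
      ring
    have hsub : ∀ m : {m : Fin N // m ∉ B},
        (d m.1)⁻¹ * (Xm m k * Xm m l) = (d m.1)⁻¹ * (X m.1 k * X m.1 l) := by
      intro m; rw [hXm, hXm]
    rw [Finset.sum_congr rfl (fun m _ => hsub m), hBpart]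
    ring
  -- A is positive definite
  have hApd : A.PosDef := by
    rw [hsplit]
    exact my_posDef_add_posSemidef hAmpd (my_smul_vmv_psd c hc.le xj)
  have hAdet : IsUnit A.det := hApd.det_pos.ne'.isUnit
  have hAmdet : IsUnit Am.det := hAmpd.det_pos.ne'.isUnit
  -- key mulVec identities
  have hAu : A *ᵥ (V *ᵥ xj) = xj := by
    rw [hV, mulVec_mulVec, Matrix.mul_nonsing_inv A hAdet, one_mulVec]
  have hsubA : Am = A - c • vecMulVec xj xj := by rw [hsplit, add_sub_cancel_right]
  have hkey : ∀ w, Am *ᵥ w = A *ᵥ w - (c * (xj ⬝ᵥ w)) • xj := by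
    intro w
    rw [hsubA, Matrix.sub_mulVec, smul_mulVec, my_vecMulVec_mulVec, smul_smul]
  set t : ℝ := xj ⬝ᵥ V *ᵥ xj with htdef
  -- first claim
  have claim1 : c * t < 1 := by
    by_cases hx : xj = 0
    · simp [htdef, hx]
    · have hVpd : (A⁻¹).PosDef := hApd.inv
      have ht : 0 < t := by
        rw [htdef, hV]
        simpa using hVpd.dotProduct_mulVec_pos hx
      have hu0 : V *ᵥ xj ≠ 0 := by
        intro h
        apply hx
        rw [← hAu, h, mulVec_zero]
      have hpos := hAmpd.dotProduct_mulVec_pos hu0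
      rw [hkey, hAu] at hpos
      have hcomm : (V *ᵥ xj) ⬝ᵥ xj = t := by rw [htdef, dotProduct_comm]
      rw [show star (V *ᵥ xj) = V *ᵥ xj from rfl] at hpos
      rw [dotProduct_sub, dotProduct_smul, hcomm, smul_eq_mul] at hpos
      -- hpos : 0 < t - c * t * t
      nlinarith
  refine ⟨claim1, ?_⟩
  -- second claim
  have h1ct : (0:ℝ) < 1 - c * t := by linarith
  set s : ℝ := c * (Yhatj - Ybarj) / (1 - c * t) with hsdef
  -- b decomposition
  have hbsplit : (Xᵀ * Φ⁻¹) *ᵥ Y = (Xmᵀ * Φm⁻¹) *ᵥ Ym + (c * Ybarj) • xj := by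
    rw [hΦinv, hΦminv]
    ext k
    simp only [Pi.add_apply, Pi.smul_apply, smul_eq_mul]
    rw [trv_apply, trv_apply]
    rw [splitsum B (fun m => (d m)⁻¹ * (X m k * Y m))]
    have hBpart : ∑ m ∈ B, (d m)⁻¹ * (X m k * Y m) = c * Ybarj * xj k := by
      have h1 : ∀ m ∈ B, (d m)⁻¹ * (X m k * Y m) = (φj ^ 2)⁻¹ * xj k * Y m := by
        intro m hm
        rw [hdB m hm, hrow' m hm k]
        ring
      rw [Finset.sum_congr rfl h1, ← Finset.mul_sum]
      rw [hcdef, show Ybarj = (∑ m ∈ B, Y m) / nj from rfl]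
      field_simp
    have hsub : ∀ m : {m : Fin N // m ∉ B},
        (d m.1)⁻¹ * (Xm m k * Ym m) = (d m.1)⁻¹ * (X m.1 k * Y m.1) := by
      intro m; rw [hXm]
    rw [Finset.sum_congr rfl (fun m _ => hsub m), hBpart]
    exact add_comm _ _
  have hβ : βhat = V *ᵥ ((Xᵀ * Φ⁻¹) *ᵥ Y) := by
    rw [show βhat = (V * Xᵀ * Φ⁻¹) *ᵥ Y from rfl, Matrix.mul_assoc, ← mulVec_mulVec]
  have hAβ : A *ᵥ βhat = (Xᵀ * Φ⁻¹) *ᵥ Y := by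
    rw [hβ, hV, mulVec_mulVec, Matrix.mul_nonsing_inv A hAdet, one_mulVec]
  have hYhat : xj ⬝ᵥ βhat = Yhatj := rfl
  -- Am applied to the claimed solution gives bm
  have hAmsol : Am *ᵥ (βhat + s • (V *ᵥ xj)) = (Xmᵀ * Φm⁻¹) *ᵥ Ym := by
    rw [mulVec_add, Matrix.mulVec_smul, hkey, hkey, hAβ, hAu, hYhat, hbsplit]
    have hct : xj ⬝ᵥ V *ᵥ xj = t := rfl
    rw [hct]
    ext k
    simp only [Pi.add_apply, Pi.sub_apply, Pi.smul_apply, smul_eq_mul]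
    rw [hsdef]
    field_simp
    ring
  -- conclude
  have hβm : βm = Vm *ᵥ ((Xmᵀ * Φm⁻¹) *ᵥ Ym) := by
    rw [show βm = (Vm * Xmᵀ * Φm⁻¹) *ᵥ Ym from rfl, Matrix.mul_assoc, ← mulVec_mulVec]
  rw [hβm, ← hAmsol, hVmdef, mulVec_mulVec, Matrix.nonsing_inv_mul Am hAmdet, one_mulVec]
end
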